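/- Let k be a commutative ring, A a k-algebra, e an idempotent of A, Λ := eAe, and λ ∈ Z(Λ). Then the multiplication ∗ on the k-module A ⊕ (Ae ⊗_Λ eA) given by (a + b e⊗e c) ∗ (a' + b' e⊗e c') = a a' + (a b' e ⊗ e c' + b e ⊗ e c a' + b e c b' e ⊗ λ e c') is associative with identity 1_A, and the resulting k-algebra R(A,e,λ) is an idealized extension of A by Ae ⊗_Λ eA: A is a subalgebra of R(A,e,λ) with the same identity, Ae ⊗_Λ eA is a two-sided ideal, and R(A,e,λ) = A ⊕ (Ae ⊗_Λ eA) as A-A-bimodules. -/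

import Mathlib

/-!
Common setup: bimodules over a ring `A`, a universal-property description of the
`A`-`A`-bimodule `Ae ⊗_{eAe} eA` (with distinguished element `u = e ⊗ e`),
a universal-property description of tensor products of bimodules over `A`,
and the center of the corner ring `eAe`.
-/

open MulOpposite

universe u

namespace Paper

/-- A bundled `A`-`A`-bimodule, encoded via commuting left `A`- and left `Aᵐᵒᵖ`-actions. -/
structure Bimod (A : Type u) [Ring A] : Type (u + 1) where
  carrier : Type u
  [addCommGroup : AddCommGroup carrier]
  [modLeft : Module A carrier]
  [modRight : Module Aᵐᵒᵖ carrier]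
  [smulComm : SMulCommClass A Aᵐᵒᵖ carrier]

attribute [instance] Bimod.addCommGroup Bimod.modLeft Bimod.modRight Bimod.smulComm

/-- A homomorphism of `A`-`A`-bimodules. -/
def IsBimodHom (A : Type u) [Ring A] {X Y : Type u} [AddCommGroup X] [AddCommGroup Y]
    [Module A X] [Module Aᵐᵒᵖ X] [Module A Y] [Module Aᵐᵒᵖ Y] (g : X → Y) : Prop :=
  (∀ x y : X, g (x + y) = g x + g y) ∧ (∀ (a : A) (x : X), g (a • x) = a • g x) ∧
    (∀ (a : Aᵐᵒᵖ) (x : X), g (a • x) = a • g x)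

variable (A : Type u) [Ring A]

/-- `(X, u)` is a model for the `A`-`A`-bimodule `Ae ⊗_{eAe} eA`, where `u` plays the
role of `e ⊗ e`.  This is expressed by the universal property: bimodule maps out of `X`
correspond exactly to elements `v` of the target with `v = e v e` and
`λ • v = v • λ` for all `λ ∈ eAe`. -/
structure IsAeTensor (e : A) (X : Type u) [AddCommGroup X]
    [Module A X] [Module Aᵐᵒᵖ X] [SMulCommClass A Aᵐᵒᵖ X] (u : X) : Prop where
  smul_e : e • u = u
  op_smul_e : op e • u = u
  balance : ∀ a : A, (e * a * e) • u = op (e * a * e) • u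
  universal : ∀ (Y : Bimod.{u} A) (v : Y.carrier), e • v = v → op e • v = v →
    (∀ a : A, (e * a * e) • v = op (e * a * e) • v) →
      ∃! g : X → Y.carrier, IsBimodHom A g ∧ g u = v

/-- The element `ae ⊗ eb` of (a model `(X, u)` of) `Ae ⊗_{eAe} eA`. -/
def tmk (e : A) {X : Type u} [AddCommGroup X] [Module A X] [Module Aᵐᵒᵖ X]
    (u : X) (a b : A) : X :=
  (a * e) • (op (e * b) • u)

/-- `t : X → Y → Z` is biadditive, `A`-balanced and bilinear over the outer
`A`-`A`-bimodule structures. -/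
def IsBalancedBiadd {X Y Z : Type u} [AddCommGroup X] [AddCommGroup Y] [AddCommGroup Z]
    [Module A X] [Module Aᵐᵒᵖ X] [Module A Y] [Module Aᵐᵒᵖ Y] [Module A Z] [Module Aᵐᵒᵖ Z]
    (t : X → Y → Z) : Prop :=
  (∀ x x' y, t (x + x') y = t x y + t x' y) ∧
  (∀ x y y', t x (y + y') = t x y + t x y') ∧
  (∀ (a : A) x y, t (op a • x) y = t x (a • y)) ∧
  (∀ (a : A) x y, t (a • x) y = a • t x y) ∧
  (∀ (a : A) x y, t x (op a • y) = op a • t x y)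

/-- `t : X → Y → T` is a model for the tensor product `X ⊗_A Y` of `A`-`A`-bimodules. -/
structure IsTensorOverA {X Y T : Type u} [AddCommGroup X] [AddCommGroup Y] [AddCommGroup T]
    [Module A X] [Module Aᵐᵒᵖ X] [Module A Y] [Module Aᵐᵒᵖ Y] [Module A T] [Module Aᵐᵒᵖ T]
    [SMulCommClass A Aᵐᵒᵖ T] (t : X → Y → T) : Prop where
  balanced : IsBalancedBiadd A t
  universal : ∀ (Z : Bimod.{u} A) (s : X → Y → Z.carrier), IsBalancedBiadd A s →
    ∃! g : T → Z.carrier, IsBimodHom A g ∧ ∀ x y, g (t x y) = s x y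

/-- The center `Z(eAe)` of the corner ring `eAe`, as a subset of `A`. -/
def centerCorner (e : A) : Set A :=
  {z | z = e * z * e ∧ ∀ a : A, z * (e * a * e) = (e * a * e) * z}

end Paper

namespace Paper

open MulOpposite

variable (A : Type u) [Ring A]

/-- The multiplication of the mirror-reflective algebra `R(A, e, λ)` on the
underlying `k`-module `A ⊕ (Ae ⊗_{eAe} eA)`, where `m = ω_λ` gives the
products of elements of the ideal `Ae ⊗_{eAe} eA`. -/
def mirrorMul {X : Type u} [AddCommGroup X] [Module A X] [Module Aᵐᵒᵖ X]
    (m : X → X → X) (p q : A × X) : A × X :=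
  (p.1 * q.1, p.1 • q.2 + op q.1 • p.2 + m p.2 q.2)

/-- Auxiliary ring computation: a central element `lam` of the corner ring `eAe`
can be moved across a factor, inside the corner. -/
private lemma cent_move {A : Type u} [Ring A] {e lam : A} (h1 : e * lam = lam)
    (h2 : lam * e = lam) (hc : ∀ a : A, lam * (e * a * e) = (e * a * e) * lam) (w : A) :
    e * lam * w * lam * e = e * w * lam * lam * e := by
  have k1 : lam * w * lam = e * w * e * lam * lam := by
    calc lam * w * lam = (lam * e) * w * (e * lam) := by rw [h1, h2]
    _ = lam * (e * w * e) * lam := by simp only [mul_assoc]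
    _ = e * w * e * lam * lam := by rw [hc w]
  calc e * lam * w * lam * e = lam * w * (lam * e) := by
        rw [h1, mul_assoc (lam * w) lam e]
  _ = lam * w * lam := by rw [h2]
  _ = e * w * e * lam * lam := k1
  _ = e * w * lam * lam * e := by
        rw [mul_assoc (e * w) e lam, h1, mul_assoc (e * w * lam) lam e, h2]

/-- The multiplication
`(a + be⊗ec) ∗ (a' + b'e⊗ec') = aa' + (ab'e⊗ec' + be⊗eca' + becb'e⊗λec')`
on `A ⊕ (Ae ⊗_{eAe} eA)` is associative with identity `1_A`, distributive, and the
resulting `k`-algebra `R(A, e, λ)` is an idealized extension of `A` by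
`Ae ⊗_{eAe} eA`: `A` is a subalgebra with the same identity and
`Ae ⊗_{eAe} eA` is a two-sided ideal. -/
theorem mirror_reflective_is_idealized_extension
    (k : Type u) [CommRing k] [Algebra k A]
    (e : A) (he : IsIdempotentElem e)
    (lam : A) (hlam : lam ∈ centerCorner A e)
    (X : Type u) [AddCommGroup X] [Module A X] [Module Aᵐᵒᵖ X] [SMulCommClass A Aᵐᵒᵖ X]
    (u : X) (hX : IsAeTensor A e X u)
    -- `m = ω_λ`, the multiplication on the ideal `X`:
    (m : X → X → X) (hm : IsBalancedBiadd A m)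
    (hmspec : ∀ b c b' c' : A, m (tmk A e u b c) (tmk A e u b' c') =
      tmk A e u (b * e * c * b') (lam * c')) :
    -- associativity
    (∀ p q r : A × X, mirrorMul A m (mirrorMul A m p q) r =
        mirrorMul A m p (mirrorMul A m q r)) ∧
    -- `1_A` is the identity
    (∀ p : A × X, mirrorMul A m (1, 0) p = p) ∧
    (∀ p : A × X, mirrorMul A m p (1, 0) = p) ∧
    -- distributivity (so that `R(A, e, λ)` is a `k`-algebra)
    (∀ p q r : A × X, mirrorMul A m p (q + r) = mirrorMul A m p q + mirrorMul A m p r) ∧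
    (∀ p q r : A × X, mirrorMul A m (p + q) r = mirrorMul A m p r + mirrorMul A m q r) ∧
    (∀ (c : k) (p q : A × X), mirrorMul A m (algebraMap k A c * p.1, algebraMap k A c • p.2) q =
        (algebraMap k A c * (mirrorMul A m p q).1, algebraMap k A c • (mirrorMul A m p q).2)) ∧
    -- `A` is a subalgebra via `a ↦ (a, 0)`
    (∀ a a' : A, mirrorMul A m (a, 0) (a', 0) = (a * a', 0)) ∧
    -- `X` is a two-sided ideal via `x ↦ (0, x)`
    (∀ (x : X) (p : A × X), (mirrorMul A m (0, x) p).1 = 0 ∧ (mirrorMul A m p (0, x)).1 = 0) ∧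
    -- and `R(A, e, λ) = A ⊕ X` as `A`-`A`-bimodules
    (∀ (a : A) (x : X), mirrorMul A m (a, 0) (0, x) = (0, a • x) ∧
        mirrorMul A m (0, x) (a, 0) = (0, op a • x)) := by
  haveI : SMulCommClass Aᵐᵒᵖ A X := SMulCommClass.symm A Aᵐᵒᵖ X
  obtain ⟨hz1, hz2⟩ := hlam
  obtain ⟨hadd_l, hadd_r, hbalm, hsmul_l, hsmul_r⟩ := hm
  -- basic ring facts about `e` and `lam`
  have h1 : e * lam = lam := by
    conv_lhs => rw [hz1]
    rw [← mul_assoc, ← mul_assoc, he, ← hz1]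
  have h2 : lam * e = lam := by
    conv_lhs => rw [hz1]
    rw [mul_assoc (e * lam) e e, he, ← hz1]
  have hbalu : lam • u = op lam • u := by
    have h := hX.balance lam
    rwa [← hz1] at h
  -- basic facts about `tmk`
  have top : ∀ b : A, op (e * b) • u = op b • u := by
    intro b
    rw [op_mul, mul_smul, hX.op_smul_e]
  have tmk_eq : ∀ (b c b' : A), b * e = b' * e → tmk A e u b c = tmk A e u b' c := by
    intro b c b' h
    simp only [tmk]
    rw [h]
  have tmk_smul : ∀ a b c : A, a • tmk A e u b c = tmk A e u (a * b) c := by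
    intro a b c
    simp only [tmk]
    rw [← mul_smul, ← mul_assoc]
  have gen_tmk : ∀ b : A, op b • u = tmk A e u 1 b := by
    intro b
    simp only [tmk, top, one_mul]
    rw [smul_comm, hX.smul_e]
  have L1 : ∀ x y : A, tmk A e u x (lam * y) = tmk A e u (x * lam) y := by
    intro x y
    simp only [tmk]
    have hel : e * (lam * y) = lam * y := by rw [← mul_assoc, h1]
    rw [hel, op_mul, mul_smul (op y) (op lam) u, ← hbalu, smul_comm, ← mul_smul, top y,
      mul_assoc x e lam, h1, mul_assoc x lam e, h2]
    exact smul_comm (op y) (x * lam) u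
  -- zero laws for `m`
  have mzero_l : ∀ y : X, m 0 y = 0 := by
    intro y
    have h := hadd_l 0 0 y
    rw [add_zero] at h
    exact (right_eq_add.mp h)
  have mzero_r : ∀ y : X, m y 0 = 0 := by
    intro y
    have h := hadd_r y 0 0
    rw [add_zero] at h
    exact (right_eq_add.mp h)
  -- `X` is generated by the elements `tmk a b`
  let T : AddSubmonoid X := AddSubmonoid.closure {x : X | ∃ a b : A, x = tmk A e u a b}
  have Tsmul : ∀ (a : A) (y : X), y ∈ T → a • y ∈ T := by
    intro a y hy
    refine AddSubmonoid.closure_induction (motive := fun z _ => a • z ∈ T) ?_ ?_ ?_ hy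
    · rintro z ⟨b, c, rfl⟩
      beta_reduce
      rw [tmk_smul]
      exact AddSubmonoid.subset_closure ⟨a * b, c, rfl⟩
    · beta_reduce
      rw [smul_zero]; exact zero_mem T
    · intro x y _ _ hx hy
      beta_reduce
      rw [smul_add]; exact add_mem hx hy
  have memT : ∀ x : X, x ∈ T := by
    -- first: `X` is the span of the `op b • u`
    let S : Submodule A X := Submodule.span A (Set.range fun b : A => op b • u)
    have hSop : ∀ (c : Aᵐᵒᵖ) (x : X), x ∈ S → c • x ∈ S := by
      intro c x hx
      refine Submodule.span_induction (p := fun z _ => c • z ∈ S) ?_ ?_ ?_ ?_ hx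
      · rintro z ⟨b, rfl⟩
        refine Submodule.subset_span ⟨b * c.unop, ?_⟩
        show op (b * c.unop) • u = c • op b • u
        rw [op_mul, op_unop, mul_smul]
      · beta_reduce
        rw [smul_zero]; exact Submodule.zero_mem S
      · intro x y _ _ hx hy
        beta_reduce
        rw [smul_add]; exact Submodule.add_mem S hx hy
      · intro a x _ hx
        beta_reduce
        rw [smul_comm]; exact Submodule.smul_mem S a hx
    letI smOp : SMul Aᵐᵒᵖ S := ⟨fun c x => ⟨c • (x : X), hSop c x x.2⟩⟩
    have smOp_coe : ∀ (c : Aᵐᵒᵖ) (x : S), ((c • x : S) : X) = c • (x : X) := fun _ _ => rfl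
    letI : Module Aᵐᵒᵖ S :=
      { one_smul := fun x => Subtype.ext (by rw [smOp_coe, one_smul])
        mul_smul := fun a b x => Subtype.ext (by simp only [smOp_coe]; rw [mul_smul])
        smul_zero := fun a => Subtype.ext (by rw [smOp_coe]; simp)
        smul_add := fun a x y => Subtype.ext
          (by simp only [smOp_coe, Submodule.coe_add]; rw [smul_add])
        add_smul := fun a b x => Subtype.ext
          (by simp only [smOp_coe, Submodule.coe_add]; rw [add_smul])
        zero_smul := fun x => Subtype.ext (by rw [smOp_coe]; simp) }
    letI : SMulCommClass A Aᵐᵒᵖ S :=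
      ⟨fun a c x => Subtype.ext (by
        simp only [smOp_coe, SetLike.val_smul]
        rw [smul_comm])⟩
    have hu_mem : u ∈ S := Submodule.subset_span ⟨1, by show op (1 : A) • u = u; rw [op_one, one_smul]⟩
    obtain ⟨g, ⟨⟨hga, hgs, hgo⟩, hgu⟩, -⟩ :=
      hX.universal (Bimod.mk S) ⟨u, hu_mem⟩
        (Subtype.ext (by rw [SetLike.val_smul]; exact hX.smul_e))
        (Subtype.ext (by rw [smOp_coe]; exact hX.op_smul_e))
        (fun a => Subtype.ext (by
          rw [SetLike.val_smul, smOp_coe]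
          exact hX.balance a))
    obtain ⟨g₀, -, hg₀⟩ := hX.universal (Bimod.mk X) u hX.smul_e hX.op_smul_e hX.balance
    have hf : (fun x : X => ((g x : S) : X)) = g₀ := by
      refine hg₀ _ ⟨⟨?_, ?_, ?_⟩, ?_⟩
      · intro x y
        show ((g (x + y) : S) : X) = ((g x : S) : X) + ((g y : S) : X)
        rw [hga, Submodule.coe_add]
      · intro a x
        show ((g (a • x) : S) : X) = a • ((g x : S) : X)
        rw [hgs, SetLike.val_smul]
      · intro a x
        show ((g (a • x) : S) : X) = a • ((g x : S) : X)
        rw [hgo, smOp_coe]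
      · show ((g u : S) : X) = u
        rw [hgu]
    have hid : (id : X → X) = g₀ :=
      hg₀ id ⟨⟨fun _ _ => rfl, fun _ _ => rfl, fun _ _ => rfl⟩, rfl⟩
    have memS : ∀ x : X, ((g x : S) : X) = x := by
      intro x
      rw [congrFun hf x, ← congrFun hid x]
      rfl
    intro x
    have hxS : x ∈ S := by rw [← memS x]; exact (g x).2
    refine Submodule.span_induction (p := fun z _ => z ∈ T) ?_ ?_ ?_ ?_ hxS
    · rintro z ⟨b, rfl⟩
      show op b • u ∈ T
      rw [gen_tmk]
      exact AddSubmonoid.subset_closure ⟨1, b, rfl⟩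
    · exact zero_mem T
    · intro x y _ _ hx hy
      exact add_mem hx hy
    · intro a x _ hx
      exact Tsmul a x hx
  -- associativity of `m`
  have massoc : ∀ x y z : X, m (m x y) z = m x (m y z) := by
    intro x y z
    refine AddSubmonoid.closure_induction
      (motive := fun x' _ => m (m x' y) z = m x' (m y z)) ?_ ?_ ?_ (memT x)
    · rintro x' ⟨a, b, rfl⟩
      refine AddSubmonoid.closure_induction
        (motive := fun y' _ => m (m (tmk A e u a b) y') z = m (tmk A e u a b) (m y' z)) ?_ ?_ ?_
        (memT y)
      · rintro y' ⟨a', b', rfl⟩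
        refine AddSubmonoid.closure_induction
          (motive := fun z' _ => m (m (tmk A e u a b) (tmk A e u a' b')) z' =
            m (tmk A e u a b) (m (tmk A e u a' b') z')) ?_ ?_ ?_ (memT z)
        · rintro z' ⟨a'', b'', rfl⟩
          beta_reduce
          rw [hmspec, hmspec, hmspec, hmspec]
          simp only [L1]
          refine tmk_eq _ b'' _ ?_
          have h := congrArg (fun t => a * e * b * a' * t) (cent_move h1 h2 hz2 (b' * a''))
          simp only [mul_assoc] at h ⊢
          exact h
        · beta_reduce
          rw [mzero_r, mzero_r, mzero_r]
        · intro s t _ _ hs ht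
          beta_reduce at hs ht ⊢
          rw [hadd_r, hadd_r, hadd_r, hs, ht]
      · beta_reduce
        rw [mzero_r, mzero_l, mzero_r]
      · intro s t _ _ hs ht
        beta_reduce at hs ht ⊢
        rw [hadd_r, hadd_l, hadd_l, hadd_r, hs, ht]
    · beta_reduce
      rw [mzero_l, mzero_l, mzero_l]
    · intro s t _ _ hs ht
      beta_reduce at hs ht ⊢
      rw [hadd_l, hadd_l, hadd_l, hs, ht]
  refine ⟨?_, ?_, ?_, ?_, ?_, ?_, ?_, ?_, ?_⟩
  · -- associativity
    rintro ⟨p1, p2⟩ ⟨q1, q2⟩ ⟨r1, r2⟩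
    refine Prod.ext (mul_assoc p1 q1 r1) ?_
    show (p1 * q1) • r2 + op r1 • (p1 • q2 + op q1 • p2 + m p2 q2)
        + m (p1 • q2 + op q1 • p2 + m p2 q2) r2
      = p1 • (q1 • r2 + op r1 • q2 + m q2 r2) + op (q1 * r1) • p2
        + m p2 (q1 • r2 + op r1 • q2 + m q2 r2)
    simp only [mul_smul, op_mul, smul_add, hadd_l, hadd_r, hsmul_l, hsmul_r, hbalm, massoc]
    rw [smul_comm (op r1) p1 q2]
    abel
  · -- left identity
    rintro ⟨p1, p2⟩
    simp [mirrorMul, mzero_l]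
  · -- right identity
    rintro ⟨p1, p2⟩
    simp [mirrorMul, mzero_r]
  · -- right distributivity
    rintro ⟨p1, p2⟩ ⟨q1, q2⟩ ⟨r1, r2⟩
    simp only [mirrorMul, Prod.mk_add_mk, mul_add, smul_add, op_add, add_smul, hadd_r,
      Prod.mk.injEq]
    exact ⟨trivial, by abel⟩
  · -- left distributivity
    rintro ⟨p1, p2⟩ ⟨q1, q2⟩ ⟨r1, r2⟩
    simp only [mirrorMul, Prod.mk_add_mk, add_mul, smul_add, op_add, add_smul, hadd_l,
      Prod.mk.injEq]
    exact ⟨trivial, by abel⟩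
  · -- k-linearity
    rintro c ⟨p1, p2⟩ ⟨q1, q2⟩
    simp only [mirrorMul, mul_assoc, mul_smul, smul_add, hsmul_l, Prod.mk.injEq]
    exact ⟨trivial, by rw [smul_comm (op q1) (algebraMap k A c) p2]⟩
  · -- `A` is a subalgebra
    intro a a'
    simp [mirrorMul, mzero_l]
  · -- `X` is a two-sided ideal
    intro x p
    exact ⟨zero_mul p.1, mul_zero p.1⟩
  · -- bimodule structure
    intro a x
    constructor
    · simp [mirrorMul, mzero_l]
    · simp [mirrorMul, mzero_r]

end Paper
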